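/- arXiv:1604.02859 — 6 statements merged into one kernel-verified Lean document; each statement's English description precedes it below -/
import Mathlib

section
/- Let A be a complex n×n matrix that is G-Hamiltonian with respect to an invertible Hermitian matrix G. If λ is an eigenvalue of A with Re(λ) = 0 whose algebraic multiplicity is 1 (a simple eigenvalue on the imaginary axis), then every nonzero eigenvector y of A for λ satisfies ⟨y, y⟩ = y*Gy ≠ 0. -/
open Matrix Polynomial

private lemma pow_mulVec_eig {n : ℕ} {A : Matrix (Fin n) (Fin n) ℂ} {lam : ℂ}
    {y : Fin n → ℂ} (h : A *ᵥ y = lam • y) (k : ℕ) : (A ^ k) *ᵥ y = lam ^ k • y := by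
  induction k with
  | zero => simp
  | succ k ih =>
      rw [pow_succ, ← mulVec_mulVec, h, mulVec_smul, ih, pow_succ, smul_smul, mul_comm]

private lemma aeval_mulVec_eig {n : ℕ} {A : Matrix (Fin n) (Fin n) ℂ} {lam : ℂ}
    {y : Fin n → ℂ} (h : A *ᵥ y = lam • y) (r : ℂ[X]) :
    (aeval A r) *ᵥ y = r.eval lam • y := by
  induction r using Polynomial.induction_on' with
  | add p q hp hq => rw [map_add, add_mulVec, hp, hq, eval_add, add_smul]
  | monomial k c =>
      rw [aeval_monomial, eval_monomial, ← Algebra.smul_def, smul_mulVec,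
        pow_mulVec_eig h, smul_smul]

private lemma aeval_vecMul_eig {n : ℕ} {A : Matrix (Fin n) (Fin n) ℂ} {lam : ℂ}
    {v : Fin n → ℂ} (h : v ᵥ* A = lam • v) (r : ℂ[X]) :
    v ᵥ* (aeval A r) = r.eval lam • v := by
  have hsm : ∀ (c : ℂ) (M : Matrix (Fin n) (Fin n) ℂ), v ᵥ* (c • M) = c • (v ᵥ* M) := by
    intro c M
    funext j
    simp [Matrix.vecMul, dotProduct, Finset.mul_sum]
    apply Finset.sum_congr rfl
    intros
    ring
  have hp : ∀ k : ℕ, v ᵥ* (A ^ k) = lam ^ k • v := by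
    intro k
    induction k with
    | zero => simp
    | succ k ih =>
        rw [pow_succ, ← vecMul_vecMul, ih, smul_vecMul, h, smul_smul, pow_succ]
  induction r using Polynomial.induction_on' with
  | add p q hpp hqq => rw [map_add, vecMul_add, hpp, hqq, eval_add, add_smul]
  | monomial k c =>
      rw [aeval_monomial, eval_monomial, ← Algebra.smul_def, hsm, hp, smul_smul]

private lemma exists_geom {S : Type*} [Ring S] {x a : S} (h : Commute x a) (k : ℕ) :
    ∃ s : S, x ^ k - a ^ k = (x - a) * s := by
  induction k with
  | zero => exact ⟨0, by simp⟩
  | succ k ih =>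
      obtain ⟨s, hs⟩ := ih
      refine ⟨x * s + a ^ k, ?_⟩
      have h1 : x ^ (k + 1) - a ^ (k + 1) = x * (x ^ k - a ^ k) + (x - a) * a ^ k := by
        rw [pow_succ' x, pow_succ' a, mul_sub, sub_mul]
        abel
      have hx : x * (x - a) = (x - a) * x := by
        rw [mul_sub, sub_mul, h.eq]
      rw [h1, hs, ← mul_assoc, hx, mul_assoc, ← mul_add]

private lemma exists_divdiff {n : ℕ} (A : Matrix (Fin n) (Fin n) ℂ) (f : ℂ[X]) :
    ∃ d : (Matrix (Fin n) (Fin n) ℂ)[X],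
      f.map (algebraMap ℂ (Matrix (Fin n) (Fin n) ℂ)) - C (aeval A f) = (X - C A) * d := by
  induction f using Polynomial.induction_on' with
  | add p q hp hq =>
      obtain ⟨d1, h1⟩ := hp
      obtain ⟨d2, h2⟩ := hq
      refine ⟨d1 + d2, ?_⟩
      rw [Polynomial.map_add, map_add, C_add, mul_add, ← h1, ← h2]
      abel
  | monomial k c =>
      have hcomm : Commute (X : (Matrix (Fin n) (Fin n) ℂ)[X]) (C A) := (commute_X (C A))
      obtain ⟨s, hs⟩ := exists_geom hcomm k
      refine ⟨C (algebraMap ℂ (Matrix (Fin n) (Fin n) ℂ) c) * s, ?_⟩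
      have hcen : ∀ z : (Matrix (Fin n) (Fin n) ℂ)[X],
          C (algebraMap ℂ (Matrix (Fin n) (Fin n) ℂ) c) * z
            = z * C (algebraMap ℂ (Matrix (Fin n) (Fin n) ℂ) c) := by
        intro z
        have : C (algebraMap ℂ (Matrix (Fin n) (Fin n) ℂ) c)
            = algebraMap ℂ ((Matrix (Fin n) (Fin n) ℂ)[X]) c := by
          rw [Polynomial.algebraMap_apply]
        rw [this, Algebra.commutes]
      rw [Polynomial.map_monomial, aeval_monomial, ← C_mul_X_pow_eq_monomial]
      have : C (algebraMap ℂ (Matrix (Fin n) (Fin n) ℂ) c * A ^ k)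
          = C (algebraMap ℂ (Matrix (Fin n) (Fin n) ℂ) c) * (C A) ^ k := by
        rw [C_mul, ← map_pow]
      rw [this, ← mul_sub, hs, ← mul_assoc, hcen (X - C A), mul_assoc]

private lemma charmatrix_map_eval {n : ℕ} (A : Matrix (Fin n) (Fin n) ℂ) (lam : ℂ) :
    (evalRingHom lam).mapMatrix (charmatrix A)
      = lam • (1 : Matrix (Fin n) (Fin n) ℂ) - A := by
  ext i j
  by_cases hij : i = j
  · subst hij
    simp [charmatrix_apply_eq, Matrix.one_apply]
  · simp [charmatrix_apply_ne _ _ _ hij, Matrix.one_apply, hij]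

private lemma adjugate_eq_aeval {n : ℕ} (A : Matrix (Fin n) (Fin n) ℂ) (lam : ℂ) (q : ℂ[X])
    (hq : (X - C lam) * q = A.charpoly) :
    adjugate (lam • (1 : Matrix (Fin n) (Fin n) ℂ) - A) = aeval A q := by
  obtain ⟨d, hd⟩ := exists_divdiff A q
  have hCay : (C (algebraMap ℂ (Matrix (Fin n) (Fin n) ℂ) lam) - C A) * C (aeval A q) = 0 := by
    have h0 : aeval A ((X - C lam) * q) = 0 := by
      rw [hq]; exact aeval_self_charpoly A
    rw [_root_.map_mul, map_sub, aeval_X, aeval_C] at h0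
    have hz : (algebraMap ℂ (Matrix (Fin n) (Fin n) ℂ) lam - A) * aeval A q = 0 := by
      rw [← neg_sub A, neg_mul, h0, neg_zero]
    have h1 : C ((algebraMap ℂ (Matrix (Fin n) (Fin n) ℂ) lam - A) * aeval A q)
        = (C (algebraMap ℂ (Matrix (Fin n) (Fin n) ℂ) lam) - C A) * C (aeval A q) := by
      rw [_root_.map_mul, map_sub]
    rw [← h1, hz, map_zero]
  set e : (Matrix (Fin n) (Fin n) ℂ)[X] := (X - C (algebraMap ℂ (Matrix (Fin n) (Fin n) ℂ) lam)) * d + C (aeval A q) with he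
  have key : (X - C A) * e = (A.charpoly).map (algebraMap ℂ (Matrix (Fin n) (Fin n) ℂ)) := by
    have c1 : Commute (X - C A) (X - C (algebraMap ℂ (Matrix (Fin n) (Fin n) ℂ) lam)) := by
      apply Commute.sub_left
      · apply Commute.sub_right
        · exact Commute.refl X
        · exact commute_X _
      · apply Commute.sub_right
        · exact (commute_X _).symm
        · exact Commute.map (Commute.symm
            (show Commute ((algebraMap ℂ (Matrix (Fin n) (Fin n) ℂ)) lam) A from
              Algebra.commutes lam A)) (C : Matrix (Fin n) (Fin n) ℂ →+* _)
    have hmap : (A.charpoly).map (algebraMap ℂ (Matrix (Fin n) (Fin n) ℂ))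
        = (X - C (algebraMap ℂ (Matrix (Fin n) (Fin n) ℂ) lam)) * (q.map (algebraMap ℂ (Matrix (Fin n) (Fin n) ℂ))) := by
      rw [← hq, Polynomial.map_mul, Polynomial.map_sub, map_X, map_C]
    rw [he, mul_add, ← mul_assoc, c1.eq, mul_assoc, ← hd, hmap]
    have expand : (X - C (algebraMap ℂ (Matrix (Fin n) (Fin n) ℂ) lam)) *
          (q.map (algebraMap ℂ (Matrix (Fin n) (Fin n) ℂ)) - C (aeval A q)) + (X - C A) * C (aeval A q)
        = (X - C (algebraMap ℂ (Matrix (Fin n) (Fin n) ℂ) lam)) * q.map (algebraMap ℂ (Matrix (Fin n) (Fin n) ℂ))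
          + (C (algebraMap ℂ (Matrix (Fin n) (Fin n) ℂ) lam) - C A) * C (aeval A q) := by
      have hsub : (C (algebraMap ℂ (Matrix (Fin n) (Fin n) ℂ) lam) - C A) * C (aeval A q)
          = (X - C A) * C (aeval A q)
            - (X - C (algebraMap ℂ (Matrix (Fin n) (Fin n) ℂ) lam)) * C (aeval A q) := by
        rw [← sub_mul]
        congr 1
        abel
      rw [mul_sub, hsub]
      abel
    rw [expand, hCay, add_zero]
  set E : Matrix (Fin n) (Fin n) ℂ[X] := matPolyEquiv.symm e with hE
  have h3 : charmatrix A * E = A.charpoly • (1 : Matrix (Fin n) (Fin n) ℂ[X]) := by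
    apply matPolyEquiv.injective
    rw [_root_.map_mul, matPolyEquiv_charmatrix, AlgEquiv.apply_symm_apply, matPolyEquiv_smul_one, key]
  have h4 : charmatrix A * adjugate (charmatrix A)
      = A.charpoly • (1 : Matrix (Fin n) (Fin n) ℂ[X]) := by
    rw [mul_adjugate]; rfl
  have h5 : adjugate (charmatrix A) = E := by
    have h7 : charmatrix A * (adjugate (charmatrix A) - E) = 0 := by
      rw [mul_sub, h3, h4, sub_self]
    have h6 : A.charpoly • (adjugate (charmatrix A) - E) = 0 := by
      calc A.charpoly • (adjugate (charmatrix A) - E)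
          = (A.charpoly • (1 : Matrix (Fin n) (Fin n) ℂ[X]))
            * (adjugate (charmatrix A) - E) := by rw [smul_mul_assoc, one_mul]
        _ = (adjugate (charmatrix A) * charmatrix A) * (adjugate (charmatrix A) - E) := by
            rw [adjugate_mul]; rfl
        _ = adjugate (charmatrix A) * (charmatrix A * (adjugate (charmatrix A) - E)) := by
            rw [mul_assoc]
        _ = 0 := by rw [h7, mul_zero]
    have hcp : A.charpoly ≠ 0 := (A.charpoly_monic).ne_zero
    apply sub_eq_zero.mp
    apply Matrix.ext
    intro i j
    have h9 : A.charpoly * (adjugate (charmatrix A) - E) i j = 0 := by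
      have := congrFun (congrFun h6 i) j
      simpa using this
    rcases mul_eq_zero.mp h9 with h | h
    · exact absurd h hcp
    · simpa using h
  have h11 : adjugate (lam • (1 : (Matrix (Fin n) (Fin n) ℂ)) - A)
      = (evalRingHom lam).mapMatrix (adjugate (charmatrix A)) := by
    rw [RingHom.map_adjugate, charmatrix_map_eval]
  rw [h11, h5]
  have h13 : matPolyEquiv.symm (X - C (algebraMap ℂ (Matrix (Fin n) (Fin n) ℂ) lam))
      = (X - C lam) • (1 : Matrix (Fin n) (Fin n) ℂ[X]) := by
    apply matPolyEquiv.injective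
    rw [AlgEquiv.apply_symm_apply, matPolyEquiv_smul_one, Polynomial.map_sub, map_X, map_C]
  have hEeq : E = ((X - C lam) • (1 : Matrix (Fin n) (Fin n) ℂ[X])) * matPolyEquiv.symm d
      + (aeval A q).map C := by
    rw [hE, he, map_add, _root_.map_mul, h13, matPolyEquiv_symm_C]
  rw [hEeq, map_add, _root_.map_mul]
  have h14 : (evalRingHom lam).mapMatrix ((X - C lam) • (1 : Matrix (Fin n) (Fin n) ℂ[X]))
      = 0 := by
    ext i j
    by_cases hij : i = j <;> simp [Matrix.one_apply, hij]
  have h15 : (evalRingHom lam).mapMatrix ((aeval A q).map C) = aeval A q := by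
    ext i j
    simp
  rw [h14, h15, zero_mul, zero_add]

/-- For a simple eigenvalue `λ` of a `G`-Hamiltonian matrix `A` on the imaginary axis,
every nonzero eigenvector `y` satisfies `⟨y, y⟩ = yᴴ G y ≠ 0`. -/
theorem ghamiltonian_simple_imaginary_eigenvector_nondegenerate {n : ℕ}
    (G A : Matrix (Fin n) (Fin n) ℂ) (hG : G.IsHermitian) (hGinv : IsUnit G.det)
    (hA : Aᴴ * G + G * A = 0) (lam : ℂ) (hspec : lam ∈ spectrum ℂ A)
    (hre : lam.re = 0) (hsimple : (A.charpoly).rootMultiplicity lam = 1)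
    (y : Fin n → ℂ) (hy : y ≠ 0) (heig : A *ᵥ y = lam • y) :
    star y ⬝ᵥ (G *ᵥ y) ≠ 0 := by
  intro hcontra
  set B := lam • (1 : Matrix (Fin n) (Fin n) ℂ) - A with hB
  have hpne : A.charpoly ≠ 0 := (A.charpoly_monic).ne_zero
  have hroot : A.charpoly.IsRoot lam := (rootMultiplicity_pos hpne).mp (by omega)
  set q := A.charpoly /ₘ (X - C lam) with hqdef
  have hfac : (X - C lam) * q = A.charpoly := mul_divByMonic_eq_iff_isRoot.mpr hroot
  have hqlam : q.eval lam ≠ 0 := by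
    intro h0
    have hdvd : (X - C lam) ∣ q := dvd_iff_isRoot.mpr h0
    obtain ⟨q', hq'⟩ := hdvd
    have hdd : (X - C lam) ^ 2 ∣ A.charpoly := ⟨q', by rw [← hfac, hq']; ring⟩
    have := (le_rootMultiplicity_iff hpne).mpr hdd
    omega
  have hN := adjugate_eq_aeval A lam q hfac
  have hNy : adjugate B *ᵥ y = q.eval lam • y := by
    rw [hB, hN]; exact aeval_mulVec_eig heig q
  have hBy : B *ᵥ y = 0 := by
    rw [hB, sub_mulVec, smul_mulVec, one_mulVec, heig, sub_self]
  have hdetB : B.det = 0 := by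
    have h1 : B = (evalRingHom lam).mapMatrix (charmatrix A) := (charmatrix_map_eval A lam).symm
    rw [h1, ← RingHom.map_det]
    simpa [Matrix.charpoly] using hroot
  -- kernel of B is spanned by y
  have hker : ∀ u : Fin n → ℂ, B *ᵥ u = 0 → ∃ c : ℂ, u = c • y := by
    intro u hu
    by_contra hnc
    push_neg at hnc
    have key : ∀ j : Fin n, ∃ w : Fin n → ℂ, w ≠ 0 ∧ B *ᵥ w = 0 ∧ w j = 0 := by
      intro j
      by_cases hyj : y j = 0
      · exact ⟨y, hy, hBy, hyj⟩
      · refine ⟨u j • y - y j • u, ?_, ?_, ?_⟩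
        · intro h0
          apply hnc (u j / y j)
          have heq : u j • y = y j • u := by rwa [sub_eq_zero] at h0
          calc u = (y j)⁻¹ • (y j • u) := by rw [smul_smul, inv_mul_cancel₀ hyj, one_smul]
            _ = (y j)⁻¹ • (u j • y) := by rw [heq]
            _ = (u j / y j) • y := by rw [smul_smul, div_eq_mul_inv, mul_comm]
        · rw [mulVec_sub, mulVec_smul, mulVec_smul, hBy, hu, smul_zero, smul_zero, sub_self]
        · simp [mul_comm]
    have hcy : adjugate B *ᵥ y = 0 := by
      rw [← cramer_eq_adjugate_mulVec]
      funext j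
      rw [cramer_apply]
      obtain ⟨w, hw0, hwB, hwj⟩ := key j
      apply (Matrix.exists_mulVec_eq_zero_iff).mp
      refine ⟨w, hw0, ?_⟩
      funext i
      have hterm : ∀ k, (B.updateCol j y) i k * w k = B i k * w k := by
        intro k
        by_cases hk : k = j
        · subst hk; rw [hwj, mul_zero, mul_zero]
        · rw [updateCol_ne hk]
      calc ((B.updateCol j y) *ᵥ w) i = ∑ k, (B.updateCol j y) i k * w k := rfl
        _ = ∑ k, B i k * w k := Finset.sum_congr rfl (fun k _ => hterm k)
        _ = (B *ᵥ w) i := rfl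
        _ = 0 := by rw [hwB]; rfl
    rw [hNy] at hcy
    rcases smul_eq_zero.mp hcy with h | h
    · exact hqlam h
    · exact hy h
  -- left eigenvector v = star y ᵥ* G
  set v := star y ᵥ* G with hv
  have hconj : (starRingEnd ℂ) lam = -lam := by
    apply Complex.ext <;> simp [hre]
  have hGA : G * A = -(Aᴴ * G) := by
    have := hA
    linear_combination (norm := noncomm_ring) this
  have hvA : v ᵥ* A = lam • v := by
    calc v ᵥ* A = star y ᵥ* (G * A) := by rw [hv, vecMul_vecMul]
      _ = -(star y ᵥ* (Aᴴ * G)) := by rw [hGA, vecMul_neg]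
      _ = -((star y ᵥ* Aᴴ) ᵥ* G) := by rw [vecMul_vecMul]
      _ = -((star (A *ᵥ y)) ᵥ* G) := by rw [star_mulVec]
      _ = -(((starRingEnd ℂ) lam • star y) ᵥ* G) := by
          rw [heig, star_smul]; rfl
      _ = -((-lam • star y) ᵥ* G) := by rw [hconj]
      _ = lam • v := by rw [hv, smul_vecMul, neg_smul, neg_neg]
  have hvN : v ᵥ* adjugate B = q.eval lam • v := by
    rw [hB, hN]; exact aeval_vecMul_eig hvA q
  have hvne : v ≠ 0 := by
    intro h0
    have h1 : v ᵥ* G⁻¹ = star y := by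
      rw [hv, vecMul_vecMul, mul_nonsing_inv _ hGinv, vecMul_one]
    rw [h0, zero_vecMul] at h1
    apply hy
    have : star y = 0 := h1.symm
    funext i
    have := congrFun this i
    simpa using this
  have hBadj : B * adjugate B = 0 := by rw [mul_adjugate, hdetB, zero_smul]
  have hcols : ∀ j, ∃ c : ℂ, (fun i => adjugate B i j) = c • y := by
    intro j
    apply hker
    funext i
    calc (B *ᵥ fun i => adjugate B i j) i = ∑ k, B i k * adjugate B k j := rfl
      _ = (B * adjugate B) i j := (mul_apply).symm
      _ = 0 := by rw [hBadj]; rfl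
  have hdot : v ⬝ᵥ y = 0 := by
    rw [hv, ← dotProduct_mulVec]
    exact hcontra
  have hfinal : q.eval lam • v = 0 := by
    rw [← hvN]
    funext j
    obtain ⟨c, hc⟩ := hcols j
    calc (v ᵥ* adjugate B) j = ∑ i, v i * adjugate B i j := rfl
      _ = v ⬝ᵥ (fun i => adjugate B i j) := rfl
      _ = v ⬝ᵥ (c • y) := by rw [hc]
      _ = c * (v ⬝ᵥ y) := by
          simp only [dotProduct, Finset.mul_sum, Pi.smul_apply, smul_eq_mul]
          apply Finset.sum_congr rfl
          intro i _
          ring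
      _ = 0 := by rw [hdot, mul_zero]
  rcases smul_eq_zero.mp hfinal with h | h
  · exact hqlam h
  · exact hvne h
end

section
/- Let A be a complex n×n matrix that is G-Hamiltonian with respect to an invertible Hermitian matrix G, and let λ be a purely imaginary eigenvalue of A that is semisimple (its algebraic multiplicity equals its geometric multiplicity). Then the Hermitian form (y, z) ↦ z*Gy restricted to the eigenspace ker(A − λI) is nondegenerate: for every nonzero y ∈ ker(A − λI) there exists z ∈ ker(A − λI) with z*Gy ≠ 0. -/
open Matrix Polynomial

/-- Characteristic polynomial of a shift `A - lam • 1`. -/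
lemma aux_charpoly_shift {n : ℕ} (A : Matrix (Fin n) (Fin n) ℂ) (lam : ℂ) :
    (A - lam • 1).charpoly = (A.charpoly).comp (X + C lam) := by
  classical
  set f : ℂ[X] →+* ℂ[X] := eval₂RingHom Polynomial.C (X + C lam) with hf
  have hmap : (charmatrix A).map f = charmatrix (A - lam • (1 : Matrix (Fin n) (Fin n) ℂ)) := by
    ext i j
    by_cases h : i = j
    · subst h
      simp [f, charmatrix_apply_eq, Matrix.sub_apply, Matrix.smul_apply, Matrix.one_apply,
        eval₂_sub]
      ring
    · simp [f, charmatrix_apply_ne _ _ _ h, Matrix.sub_apply, Matrix.smul_apply,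
        Matrix.one_apply_ne h]
  have hdet : (A - lam • (1 : Matrix (Fin n) (Fin n) ℂ)).charpoly = f A.charpoly := by
    rw [Matrix.charpoly, Matrix.charpoly, ← hmap]
    rw [show A.charmatrix.map ⇑f = f.mapMatrix A.charmatrix from rfl, ← RingHom.map_det]
  rw [hdet]
  rfl

lemma aux_dvd_comp {R : Type*} [CommSemiring R] {p q u : R[X]} (h : p ∣ q) :
    p.comp u ∣ q.comp u := by
  obtain ⟨c, rfl⟩ := h
  exact ⟨c.comp u, by rw [Polynomial.mul_comp]⟩

/-- Root multiplicity under a shift of the variable. -/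
lemma aux_rootMultiplicity_shift (p : ℂ[X]) (hp : p ≠ 0) (lam : ℂ) :
    rootMultiplicity 0 (p.comp (X + C lam)) = rootMultiplicity lam p := by
  have hcomp : (p.comp (X + C lam)).comp (X - C lam) = p := by
    rw [Polynomial.comp_assoc]
    simp
  have hq : p.comp (X + C lam) ≠ 0 := by
    intro h
    apply hp
    rw [← hcomp, h, Polynomial.zero_comp]
  apply le_antisymm
  · rw [le_rootMultiplicity_iff hp]
    have h1 : (X : ℂ[X]) ^ (rootMultiplicity 0 (p.comp (X + C lam))) ∣ p.comp (X + C lam) := by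
      have := Polynomial.pow_rootMultiplicity_dvd (p.comp (X + C lam)) 0
      simpa using this
    have h2 := aux_dvd_comp (u := (X - C lam)) h1
    rw [hcomp] at h2
    simpa using h2
  · rw [le_rootMultiplicity_iff hq]
    have h1 : ((X : ℂ[X]) - C lam) ^ (rootMultiplicity lam p) ∣ p :=
      Polynomial.pow_rootMultiplicity_dvd p lam
    have h2 := aux_dvd_comp (u := (X + C lam)) h1
    simp only [Polynomial.pow_comp, Polynomial.sub_comp, Polynomial.X_comp,
      Polynomial.C_comp, add_sub_cancel_right] at h2
    simpa using h2

/-- If `x` is orthogonal to the kernel of `B`, it lies in the range of `Bᴴ`. -/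
lemma aux_exists_conjTranspose_mulVec {n : ℕ} (B : Matrix (Fin n) (Fin n) ℂ) (x : Fin n → ℂ)
    (h : ∀ z, B *ᵥ z = 0 → star z ⬝ᵥ x = 0) : ∃ w, Bᴴ *ᵥ w = x := by
  classical
  set T := Matrix.toEuclideanLin B with hT
  set S := LinearMap.adjoint T with hS
  have hST : S = Matrix.toEuclideanLin Bᴴ :=
    (Matrix.toEuclideanLin_conjTranspose_eq_adjoint B).symm
  have hker : (LinearMap.range S)ᗮ = LinearMap.ker T := by
    ext u
    rw [Submodule.mem_orthogonal, LinearMap.mem_ker]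
    constructor
    · intro hu
      have h1 : ∀ w, inner (𝕜 := ℂ) w (T u) = 0 := by
        intro w
        rw [← LinearMap.adjoint_inner_left]
        exact hu _ ⟨w, rfl⟩
      have := h1 (T u)
      rwa [inner_self_eq_zero] at this
    · intro hu v hv
      obtain ⟨w, rfl⟩ := hv
      rw [LinearMap.adjoint_inner_left, hu, inner_zero_right]
  have hrange : LinearMap.range S = (LinearMap.ker T)ᗮ := by
    rw [← hker, Submodule.orthogonal_orthogonal]
  have hx : (WithLp.equiv 2 (Fin n → ℂ)).symm x ∈ (LinearMap.ker T)ᗮ := by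
    rw [Submodule.mem_orthogonal]
    intro z hz
    rw [LinearMap.mem_ker] at hz
    have hz' : B *ᵥ (WithLp.equiv 2 (Fin n → ℂ)) z = 0 := by
      have := congrArg (WithLp.equiv 2 (Fin n → ℂ)) hz
      exact this
    have := h _ hz'
    simpa [EuclideanSpace.inner_eq_star_dotProduct] using (dotProduct_comm _ _).trans this
  rw [← hrange] at hx
  obtain ⟨w, hw⟩ := hx
  refine ⟨(WithLp.equiv 2 (Fin n → ℂ)) w, ?_⟩
  have := congrArg (WithLp.equiv 2 (Fin n → ℂ)) hw
  rw [hST] at this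
  simpa using this

/-- For a purely imaginary semisimple eigenvalue `λ` of a `G`-Hamiltonian matrix `A`,
the Hermitian form `(y, z) ↦ zᴴ G y` is nondegenerate on the eigenspace `ker (A - λ I)`. -/
theorem ghamiltonian_semisimple_imaginary_form_nondegenerate {n : ℕ}
    (G A : Matrix (Fin n) (Fin n) ℂ) (hG : G.IsHermitian) (hGinv : IsUnit G.det)
    (hA : Aᴴ * G + G * A = 0) (lam : ℂ) (hspec : lam ∈ spectrum ℂ A)
    (hre : lam.re = 0)
    (hsemi : (A.charpoly).rootMultiplicity lam =
      Module.finrank ℂ (Module.End.eigenspace (Matrix.toLin' A) lam)) :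
    ∀ y ∈ Module.End.eigenspace (Matrix.toLin' A) lam, y ≠ 0 →
      ∃ z ∈ Module.End.eigenspace (Matrix.toLin' A) lam, star z ⬝ᵥ (G *ᵥ y) ≠ 0 := by
  classical
  intro y hy hy0
  by_contra hcon
  push_neg at hcon
  set B := A - lam • (1 : Matrix (Fin n) (Fin n) ℂ) with hB
  set φ := Matrix.toLin' A with hφ
  -- membership in the eigenspace is the kernel of `B`
  have hE : ∀ x, x ∈ Module.End.eigenspace φ lam ↔ B *ᵥ x = 0 := by
    intro x
    rw [Module.End.mem_eigenspace_iff]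
    have : B *ᵥ x = A *ᵥ x - lam • x := by
      rw [hB, Matrix.sub_mulVec, Matrix.smul_mulVec, Matrix.one_mulVec]
    rw [this, Matrix.toLin'_apply, sub_eq_zero]
  -- orthogonality hypothesis
  have happ : ∀ z, B *ᵥ z = 0 → star z ⬝ᵥ (G *ᵥ y) = 0 := fun z hz => hcon z ((hE z).mpr hz)
  obtain ⟨w, hw⟩ := aux_exists_conjTranspose_mulVec B (G *ᵥ y) happ
  -- conj lam = -lam
  have hc : star lam = -lam := by
    apply Complex.ext <;> simp [hre]
  have hBH : Bᴴ = Aᴴ + lam • (1 : Matrix (Fin n) (Fin n) ℂ) := by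
    rw [hB, Matrix.conjTranspose_sub, Matrix.conjTranspose_smul, Matrix.conjTranspose_one, hc,
      neg_smul, sub_neg_eq_add]
  -- invert G
  obtain ⟨u, hGu⟩ : ∃ u, G *ᵥ u = w :=
    ⟨G⁻¹ *ᵥ w, by rw [Matrix.mulVec_mulVec, Matrix.mul_nonsing_inv G hGinv, Matrix.one_mulVec]⟩
  rw [← hGu] at hw
  have hAG : Aᴴ * G = -(G * A) := eq_neg_of_add_eq_zero_left hA
  have h1 : Bᴴ *ᵥ (G *ᵥ u) = G *ᵥ (-(B *ᵥ u)) := by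
    rw [hBH]
    simp only [hBH, hB, Matrix.add_mulVec, Matrix.mulVec_mulVec, hAG, Matrix.neg_mulVec,
      Matrix.smul_mulVec, Matrix.one_mulVec, Matrix.mulVec_neg, Matrix.mulVec_sub,
      Matrix.sub_mulVec, Matrix.mulVec_smul, Matrix.mul_sub, Matrix.mul_smul, Matrix.mul_one,
      Matrix.add_mul, Matrix.smul_mul, Matrix.one_mul, neg_smul, one_smul]
    abel
  have hkey : G *ᵥ y = G *ᵥ (-(B *ᵥ u)) := by rw [← hw, h1]
  have hyv : B *ᵥ (-u) = y := by
    have h4 : G⁻¹ *ᵥ (G *ᵥ y) = G⁻¹ *ᵥ (G *ᵥ (-(B *ᵥ u))) := by rw [hkey]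
    rw [Matrix.mulVec_mulVec, Matrix.mulVec_mulVec, Matrix.nonsing_inv_mul G hGinv,
      Matrix.one_mulVec, Matrix.one_mulVec] at h4
    rw [Matrix.mulVec_neg]
    exact h4.symm
  set v : Fin n → ℂ := -u with hv
  -- now the semisimplicity argument
  set ψ : Module.End ℂ (Fin n → ℂ) := φ - lam • (1 : Module.End ℂ (Fin n → ℂ)) with hψ
  have hψapp : ∀ x, ψ x = B *ᵥ x := by
    intro x
    rw [hψ]
    simp only [LinearMap.sub_apply, LinearMap.smul_apply, Module.End.one_apply]
    rw [hφ, Matrix.toLin'_apply, hB, Matrix.sub_mulVec, Matrix.smul_mulVec,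
      Matrix.one_mulVec]
  have hkerψ : Module.End.eigenspace φ lam = LinearMap.ker ψ := by
    ext x
    rw [hE, LinearMap.mem_ker, hψapp]
  have hyB : B *ᵥ y = 0 := (hE y).mp hy
  -- strict inclusion ker ψ < ker ψ²
  have hlt : LinearMap.ker ψ < LinearMap.ker (ψ * ψ) := by
    rw [lt_iff_le_and_ne]
    constructor
    · intro x hx
      rw [LinearMap.mem_ker] at hx ⊢
      rw [Module.End.mul_apply, hx, map_zero]
    · intro hEq
      have hvmem : v ∈ LinearMap.ker (ψ * ψ) := by
        rw [LinearMap.mem_ker, Module.End.mul_apply, hψapp, hψapp, hv, hyv, hyB]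
      rw [← hEq, LinearMap.mem_ker, hψapp, hv, hyv] at hvmem
      exact hy0 hvmem
  have hle2 : LinearMap.ker (ψ * ψ) ≤ Module.End.maxGenEigenspace ψ 0 := by
    intro x hx
    rw [Module.End.mem_maxGenEigenspace]
    refine ⟨2, ?_⟩
    simp only [zero_smul, sub_zero]
    rw [pow_two]
    exact hx
  -- identify the max gen eigenspace dimension with the root multiplicity
  have hψB : ψ = Matrix.toLin' B := by
    apply LinearMap.ext
    intro x
    rw [hψapp, Matrix.toLin'_apply]
  have hcharψ : ψ.charpoly = B.charpoly := by
    have h5 := LinearMap.charpoly_toMatrix ψ (Pi.basisFun ℂ (Fin n))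
    rw [← h5, LinearMap.toMatrix_eq_toMatrix', hψB]
    congr 1
    exact LinearMap.toMatrix'_toLin' B
  have hdim : Module.finrank ℂ (Module.End.maxGenEigenspace ψ 0) =
      (A.charpoly).rootMultiplicity lam := by
    rw [LinearMap.finrank_maxGenEigenspace_zero_eq, ← rootMultiplicity_eq_natTrailingDegree',
      hcharψ, hB, aux_charpoly_shift,
      aux_rootMultiplicity_shift A.charpoly (Matrix.charpoly_monic A).ne_zero lam]
  -- put things together
  have hfin1 : Module.finrank ℂ (LinearMap.ker ψ) <
      Module.finrank ℂ (LinearMap.ker (ψ * ψ)) :=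
    Submodule.finrank_lt_finrank_of_lt hlt
  have hfin2 : Module.finrank ℂ (LinearMap.ker (ψ * ψ)) ≤
      Module.finrank ℂ (Module.End.maxGenEigenspace ψ 0) :=
    Submodule.finrank_mono hle2
  rw [hdim, hsemi] at hfin2
  rw [← hkerψ] at hfin1
  omega
end

section
/- Let A be a complex n×n matrix that is G-Hamiltonian with respect to an invertible Hermitian matrix G, let λ be a purely imaginary semisimple eigenvalue of A, and let V = ker(A − λI) be its eigenspace. Then the following are equivalent: (i) there exists a nonzero y ∈ V with y*Gy = 0; (ii) there exist y₁, y₂ ∈ V with y₁*Gy₁ > 0 and y₂*Gy₂ < 0. (An eigenvalue satisfying these equivalent conditions is called of mixed kind.) -/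
open Matrix Polynomial ComplexOrder

lemma charpoly_comp_shift {n : ℕ} (A : Matrix (Fin n) (Fin n) ℂ) (c : ℂ) :
    (A.charpoly).comp (X + C c) = (A - c • 1).charpoly := by
  have h := RingHom.map_det ((aeval (X + C c : ℂ[X])).toRingHom) (charmatrix A)
  have hmap : (aeval (X + C c : ℂ[X])).toRingHom.mapMatrix (charmatrix A)
      = charmatrix (A - c • (1 : Matrix (Fin n) (Fin n) ℂ)) := by
    ext i j
    simp only [RingHom.mapMatrix_apply, Matrix.map_apply, charmatrix_apply, AlgHom.toRingHom_eq_coe,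
      RingHom.coe_coe, map_sub, aeval_C, Matrix.sub_apply, Matrix.smul_apply, Matrix.one_apply]
    by_cases hij : i = j <;>
      simp [hij, diagonal_apply, aeval_X, map_sub, map_add, Polynomial.algebraMap_eq]
    · ring
  have key : (aeval (X + C c : ℂ[X])) A.charpoly = (A - c • 1).charpoly := by
    rw [Matrix.charpoly, Matrix.charpoly, ← hmap]; exact h
  rw [← key, Polynomial.comp, ← Polynomial.algebraMap_eq, ← aeval_def]

set_option maxHeartbeats 2000000 in
/-- For a purely imaginary semisimple eigenvalue `λ` of a `G`-Hamiltonian matrix `A` with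
eigenspace `V`, there exists a nonzero `y ∈ V` with `yᴴ G y = 0` if and only if there exist
`y₁, y₂ ∈ V` with `y₁ᴴ G y₁ > 0` and `y₂ᴴ G y₂ < 0` (the eigenvalue is of mixed kind). -/
theorem ghamiltonian_mixed_kind_iff {n : ℕ}
    (G A : Matrix (Fin n) (Fin n) ℂ) (hG : G.IsHermitian) (hGinv : IsUnit G.det)
    (hA : Aᴴ * G + G * A = 0) (lam : ℂ) (hspec : lam ∈ spectrum ℂ A)
    (hre : lam.re = 0)
    (hsemi : (A.charpoly).rootMultiplicity lam =
      Module.finrank ℂ (Module.End.eigenspace (Matrix.toLin' A) lam)) :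
    (∃ y ∈ Module.End.eigenspace (Matrix.toLin' A) lam, y ≠ 0 ∧
        star y ⬝ᵥ (G *ᵥ y) = 0) ↔
      (∃ y₁ ∈ Module.End.eigenspace (Matrix.toLin' A) lam,
        ∃ y₂ ∈ Module.End.eigenspace (Matrix.toLin' A) lam,
          0 < star y₁ ⬝ᵥ (G *ᵥ y₁) ∧ star y₂ ⬝ᵥ (G *ᵥ y₂) < 0) := by
  set φ : Module.End ℂ (Fin n → ℂ) := Matrix.toLin' A with hφ
  set Mm : Matrix (Fin n) (Fin n) ℂ := A - lam • 1 with hMm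
  set ψ : Module.End ℂ (Fin n → ℂ) := Matrix.toLin' Mm with hψdef
  have hψ : ψ = φ - lam • 1 := by
    rw [hψdef, hMm, map_sub, _root_.map_smul, Matrix.toLin'_one]; rfl
  have hV : Module.End.eigenspace φ lam = LinearMap.ker ψ := by
    rw [Module.End.eigenspace_def, hψ]
  -- conj lam = -lam
  have hconj : (starRingEnd ℂ) lam = -lam := by
    apply Complex.ext <;> simp [hre]
  have hconj' : star lam = -lam := hconj
  -- hermitian symmetry of the form
  have hsymm : ∀ x y : Fin n → ℂ,
      star (star x ⬝ᵥ (G *ᵥ y)) = star y ⬝ᵥ (G *ᵥ x) := by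
    intro x y
    rw [star_dotProduct, star_mulVec, star_star, dotProduct_mulVec, hG.eq]
  -- A *ᵥ y = lam • y for eigenvectors
  have heig : ∀ y ∈ LinearMap.ker ψ, A *ᵥ y = lam • y := by
    intro y hy
    have := LinearMap.mem_ker.mp hy
    rw [hψ] at this
    have : φ y - lam • y = 0 := this
    have := sub_eq_zero.mp this
    rwa [hφ, Matrix.toLin'_apply] at this
  -- key cancellation : Mmᴴ *ᵥ (G *ᵥ y) = 0 for y in the eigenspace
  have hcancel : ∀ y ∈ LinearMap.ker ψ, Mmᴴ *ᵥ (G *ᵥ y) = 0 := by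
    intro y hy
    have hAG : Aᴴ * G = -(G * A) := eq_neg_of_add_eq_zero_left hA
    have hMH : Mmᴴ = Aᴴ + lam • 1 := by
      rw [hMm, conjTranspose_sub, conjTranspose_smul, conjTranspose_one, hconj',
        neg_smul, sub_neg_eq_add]
    rw [hMH, add_mulVec, smul_mulVec, one_mulVec, mulVec_mulVec, hAG,
      neg_mulVec, ← mulVec_mulVec, heig y hy, mulVec_smul]
    simp
  -- nondegeneracy of the form on the eigenspace
  have hnondeg : ∀ y ∈ LinearMap.ker ψ,
      (∀ z ∈ LinearMap.ker ψ, star z ⬝ᵥ (G *ᵥ y) = 0) → y = 0 := by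
    intro y hy hzero
    -- semisimplicity: ker ψ² = ker ψ
    have hch : LinearMap.charpoly ψ = Mm.charpoly := by
      rw [hψdef, ← LinearMap.charpoly_toMatrix (Matrix.toLin' Mm) (Pi.basisFun ℂ (Fin n)),
        LinearMap.toMatrix_eq_toMatrix', LinearMap.toMatrix'_toLin']
    have h1 : LinearMap.ker ψ ≤ LinearMap.ker (ψ ^ 2) := by
      intro x hx
      have hx' := LinearMap.mem_ker.mp hx
      simp [pow_two, LinearMap.mem_ker, hx']
    have h2 : LinearMap.ker (ψ ^ 2) ≤ Module.End.maxGenEigenspace ψ 0 := by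
      intro x hx
      rw [Module.End.mem_maxGenEigenspace]
      exact ⟨2, by simpa using LinearMap.mem_ker.mp hx⟩
    have h3 : Module.finrank ℂ (Module.End.maxGenEigenspace ψ 0)
        = (A.charpoly).rootMultiplicity lam := by
      rw [LinearMap.finrank_maxGenEigenspace_zero_eq, hch, ← charpoly_comp_shift,
        ← rootMultiplicity_eq_natTrailingDegree]
    have h4 : Module.finrank ℂ (LinearMap.ker (ψ ^ 2))
        ≤ Module.finrank ℂ (LinearMap.ker ψ) := by
      calc Module.finrank ℂ (LinearMap.ker (ψ ^ 2))
          ≤ Module.finrank ℂ (Module.End.maxGenEigenspace ψ 0) := Submodule.finrank_mono h2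
        _ = (A.charpoly).rootMultiplicity lam := h3
        _ = Module.finrank ℂ (Module.End.eigenspace φ lam) := hsemi
        _ = Module.finrank ℂ (LinearMap.ker ψ) := by rw [hV]
    have hker2 : LinearMap.ker ψ = LinearMap.ker (ψ ^ 2) :=
      Submodule.eq_of_le_of_finrank_le h1 h4
    -- ker ⊔ range = ⊤
    have hdisj : LinearMap.ker ψ ⊓ LinearMap.range ψ = ⊥ := by
      rw [eq_bot_iff]
      rintro x ⟨hxk, w, rfl⟩
      have : w ∈ LinearMap.ker (ψ ^ 2) := by
        rw [LinearMap.mem_ker, pow_two]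
        exact hxk
      rw [← hker2] at this
      simpa using LinearMap.mem_ker.mp this
    have htop : LinearMap.ker ψ ⊔ LinearMap.range ψ = ⊤ := by
      apply Submodule.eq_top_of_finrank_eq
      have hsum := Submodule.finrank_sup_add_finrank_inf_eq
        (LinearMap.ker ψ) (LinearMap.range ψ)
      rw [hdisj] at hsum
      simp only [finrank_bot, add_zero] at hsum
      rw [hsum, add_comm, LinearMap.finrank_range_add_finrank_ker ψ]
    -- the orthogonal complement of G *ᵥ y contains everything
    set c : Fin n → ℂ := G *ᵥ y with hc
    let S : Submodule ℂ (Fin n → ℂ) :=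
      { carrier := {v | star v ⬝ᵥ c = 0}
        add_mem' := by
          intro a b ha hb
          simp only [Set.mem_setOf_eq] at *
          rw [star_add, add_dotProduct, ha, hb, add_zero]
        zero_mem' := by simp
        smul_mem' := by
          intro r v hv
          simp only [Set.mem_setOf_eq] at *
          rw [star_smul, smul_dotProduct, hv, smul_zero] }
    have hkerS : LinearMap.ker ψ ≤ S := hzero
    have hranS : LinearMap.range ψ ≤ S := by
      rintro _ ⟨x, rfl⟩
      show star (ψ x) ⬝ᵥ c = 0
      rw [hψdef, Matrix.toLin'_apply, star_mulVec, ← dotProduct_mulVec, hc,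
        hcancel y hy, dotProduct_zero]
    have hall : ∀ v : Fin n → ℂ, star v ⬝ᵥ c = 0 := by
      intro v
      have : v ∈ S := by
        have : v ∈ LinearMap.ker ψ ⊔ LinearMap.range ψ := htop ▸ Submodule.mem_top
        exact (sup_le hkerS hranS) this
      exact this
    have hc0 : c = 0 := by
      have := hall c
      exact dotProduct_star_self_eq_zero.mp this
    -- G invertible implies y = 0
    have : G⁻¹ *ᵥ (G *ᵥ y) = y := by
      rw [mulVec_mulVec, Matrix.nonsing_inv_mul G hGinv, one_mulVec]
    rw [← this, ← hc, hc0, mulVec_zero]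
  -- the quadratic form is real
  have hreal : ∀ w : Fin n → ℂ, (star w ⬝ᵥ (G *ᵥ w)).im = 0 := by
    intro w
    have := hsymm w w
    have h := congrArg Complex.im this
    simp only [Complex.star_def, Complex.conj_im] at h
    linarith
  -- expansion of the quadratic form
  have hexp : ∀ (t : ℝ) (x u : Fin n → ℂ),
      star (x + (t : ℂ) • u) ⬝ᵥ (G *ᵥ (x + (t : ℂ) • u)) =
        star x ⬝ᵥ (G *ᵥ x) + (t : ℂ) * (star u ⬝ᵥ (G *ᵥ x) + star x ⬝ᵥ (G *ᵥ u))
          + (t : ℂ) ^ 2 * (star u ⬝ᵥ (G *ᵥ u)) := by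
    intro t x u
    rw [star_add, star_smul, mulVec_add, mulVec_smul]
    simp only [add_dotProduct, dotProduct_add, smul_dotProduct, dotProduct_smul,
      Complex.star_def, Complex.conj_ofReal, smul_eq_mul]
    ring
  -- scaling of the quadratic form
  have hscale : ∀ (a : ℂ) (v : Fin n → ℂ),
      star (a • v) ⬝ᵥ (G *ᵥ (a • v)) = (starRingEnd ℂ) a * a * (star v ⬝ᵥ (G *ᵥ v)) := by
    intro a v
    rw [star_smul, mulVec_smul, smul_dotProduct, dotProduct_smul]
    simp only [Complex.star_def, smul_eq_mul]
    ring
  constructor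
  · -- isotropic vector ⇒ mixed
    rintro ⟨y, hyV, hy0, hyq⟩
    rw [hV] at hyV
    -- nondegeneracy gives z with B(z, y) ≠ 0
    have : ¬ (∀ z ∈ LinearMap.ker ψ, star z ⬝ᵥ (G *ᵥ y) = 0) := by
      intro h
      exact hy0 (hnondeg y hyV h)
    push_neg at this
    obtain ⟨z, hzV, hza⟩ := this
    set a : ℂ := star z ⬝ᵥ (G *ᵥ y) with ha
    set u : Fin n → ℂ := a • z with hu
    have huV : u ∈ LinearMap.ker ψ := Submodule.smul_mem _ a hzV
    -- cross terms
    have hcross : star u ⬝ᵥ (G *ᵥ y) + star y ⬝ᵥ (G *ᵥ u)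
        = (2 * Complex.normSq a : ℝ) := by
      have h1 : star u ⬝ᵥ (G *ᵥ y) = (starRingEnd ℂ) a * a := by
        rw [hu, star_smul, smul_dotProduct]
        simp only [Complex.star_def, smul_eq_mul]
        rfl
      have h2 : star y ⬝ᵥ (G *ᵥ u) = a * (starRingEnd ℂ) a := by
        rw [hu, mulVec_smul, dotProduct_smul, smul_eq_mul]
        congr 1
        have := hsymm z y
        rw [← ha] at this
        rw [← this]
        rfl
      rw [h1, h2]
      have hmc : a * (starRingEnd ℂ) a = ((Complex.normSq a : ℝ) : ℂ) := Complex.mul_conj a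
      have hmc' : (starRingEnd ℂ) a * a = ((Complex.normSq a : ℝ) : ℂ) := by
        rw [mul_comm]; exact hmc
      rw [hmc, hmc']
      push_cast
      ring
    set d : ℝ := (star u ⬝ᵥ (G *ᵥ u)).re with hd
    have hdre : star u ⬝ᵥ (G *ᵥ u) = (d : ℂ) := by
      apply Complex.ext
      · simp [hd]
      · simp [hreal u]
    clear_value d
    clear_value u
    clear_value a
    set b : ℝ := 2 * Complex.normSq a with hb
    have hbpos : 0 < b := by
      have : 0 < Complex.normSq a := by
        rw [Complex.normSq_pos]; exact hza
      rw [hb]; linarith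
    set t₀ : ℝ := b / (2 * (|d| + 1)) with ht₀
    have ht₀pos : 0 < t₀ := by
      apply div_pos hbpos
      have : 0 ≤ |d| := abs_nonneg d
      linarith
    have hdt : |d| * t₀ ≤ b / 2 := by
      have key : |d| * t₀ = (|d| * b) / (2 * (|d| + 1)) := by
        rw [ht₀]; ring
      rw [key, div_le_div_iff₀ (by positivity) (by norm_num : (0:ℝ) < 2)]
      nlinarith [abs_nonneg d, hbpos]
    clear_value t₀
    clear_value b
    -- value of form at y ± t₀ u
    have hval : ∀ t : ℝ, star (y + (t : ℂ) • u) ⬝ᵥ (G *ᵥ (y + (t : ℂ) • u))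
        = ((t * b + t ^ 2 * d : ℝ) : ℂ) := by
      intro t
      rw [hexp t y u, hyq, hcross, hdre]
      push_cast
      ring
    refine ⟨y + (t₀ : ℂ) • u, ?_, y + ((-t₀ : ℝ) : ℂ) • u, ?_, ?_, ?_⟩
    · rw [hV]; exact Submodule.add_mem _ hyV (Submodule.smul_mem _ _ huV)
    · rw [hV]; exact Submodule.add_mem _ hyV (Submodule.smul_mem _ _ huV)
    · rw [hval t₀]
      rw [Complex.lt_def]
      constructor
      · simp only [Complex.zero_re, Complex.ofReal_re]
        have h1 : t₀ * b + t₀ ^ 2 * d = t₀ * (b + t₀ * d) := by ring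
        rw [h1]
        apply mul_pos ht₀pos
        have : t₀ * d ≥ -(b/2) := by
          have h2 : t₀ * d ≥ -(|d| * t₀) := by
            have := neg_abs_le d
            nlinarith [abs_nonneg d]
          linarith
        linarith
      · rw [Complex.zero_im, Complex.ofReal_im]
    · rw [hval (-t₀)]
      rw [Complex.lt_def]
      constructor
      · simp only [Complex.zero_re, Complex.ofReal_re]
        have h1 : (-t₀) * b + (-t₀) ^ 2 * d = -(t₀ * (b - t₀ * d)) := by ring
        rw [h1]
        simp only [neg_lt_zero]
        apply mul_pos ht₀pos
        have : t₀ * d ≤ b/2 := by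
          have h2 : t₀ * d ≤ |d| * t₀ := by
            have := le_abs_self d
            nlinarith [abs_nonneg d]
          linarith
        linarith
      · rw [Complex.zero_im, Complex.ofReal_im]
  · -- mixed ⇒ isotropic vector
    rintro ⟨y₁, hy₁V, y₂, hy₂V, hq₁, hq₂⟩
    rw [Complex.lt_def] at hq₁ hq₂
    obtain ⟨hq₁re, hq₁im⟩ := hq₁
    obtain ⟨hq₂re, hq₂im⟩ := hq₂
    simp only [Complex.zero_re, Complex.zero_im] at hq₁re hq₂re hq₁im hq₂im
    -- the path w t = y₂ + t (y₁ - y₂)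
    set u : Fin n → ℂ := y₁ - y₂ with huu
    obtain ⟨r0, hr0⟩ : ∃ r : ℝ, r = (star y₂ ⬝ᵥ (G *ᵥ y₂)).re := ⟨_, rfl⟩
    obtain ⟨r1, hr1⟩ : ∃ r : ℝ, r = (star u ⬝ᵥ (G *ᵥ y₂) + star y₂ ⬝ᵥ (G *ᵥ u)).re := ⟨_, rfl⟩
    obtain ⟨r2, hr2⟩ : ∃ r : ℝ, r = (star u ⬝ᵥ (G *ᵥ u)).re := ⟨_, rfl⟩
    set f : ℝ → ℝ := fun t => r0 + t * r1 + t ^ 2 * r2 with hf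
    have hfval : ∀ t : ℝ,
        (star (y₂ + (t : ℂ) • u) ⬝ᵥ (G *ᵥ (y₂ + (t : ℂ) • u))).re = f t := by
      intro t
      rw [hexp t y₂ u, hf]
      rw [hr0, hr1, hr2]
      simp only [Complex.add_re, Complex.mul_re, Complex.ofReal_re,
        Complex.ofReal_im, zero_mul, sub_zero, Complex.add_im]
      have : ((t : ℂ) ^ 2).re = t ^ 2 := by
        rw [← Complex.ofReal_pow, Complex.ofReal_re]
      have h2 : ((t : ℂ) ^ 2).im = 0 := by
        rw [← Complex.ofReal_pow, Complex.ofReal_im]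
      rw [this, h2]
      ring
    have hcont : Continuous f := by fun_prop
    have hf0 : f 0 < 0 := by
      have h00 : f 0 = r0 := by rw [hf]; ring
      rw [h00, hr0]
      exact hq₂re
    have hf1 : 0 < f 1 := by
      have := hfval 1
      have hw1 : y₂ + ((1 : ℝ) : ℂ) • u = y₁ := by
        rw [huu]; push_cast; simp
      rw [hw1] at this
      rw [← this]
      exact hq₁re
    have hiv : ∃ t ∈ Set.Icc (0:ℝ) 1, f t = 0 := by
      have := intermediate_value_Icc (by norm_num : (0:ℝ) ≤ 1) hcont.continuousOn
      have h0 : (0 : ℝ) ∈ Set.Icc (f 0) (f 1) := ⟨le_of_lt hf0, le_of_lt hf1⟩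
      obtain ⟨t, htIcc, htval⟩ := this h0
      exact ⟨t, htIcc, htval⟩
    obtain ⟨t, htIcc, htval⟩ := hiv
    set y : Fin n → ℂ := y₂ + (t : ℂ) • u with hy
    have hyV : y ∈ Module.End.eigenspace φ lam := by
      rw [hV] at *
      exact Submodule.add_mem _ hy₂V (Submodule.smul_mem _ _
        (Submodule.sub_mem _ hy₁V hy₂V))
    have hyq : star y ⬝ᵥ (G *ᵥ y) = 0 := by
      apply Complex.ext
      · rw [hy, hfval t, htval]; simp
      · rw [hreal]; simp
    have hy0 : y ≠ 0 := by
      intro h0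
      -- y₂ + t(y₁ - y₂) = 0
      have h0' : y₂ + (t : ℂ) • u = 0 := by rw [← hy]; exact h0
      rw [huu] at h0'
      by_cases ht : t = 0
      · rw [ht] at h0'
        simp only [Complex.ofReal_zero, zero_smul, add_zero] at h0'
        rw [h0'] at hq₂re
        simp at hq₂re
      · -- y₁ = c • y₂ with c = (t-1)/t
        have htne : (t : ℂ) ≠ 0 := by exact_mod_cast ht
        have hy₁eq : y₁ = (((t : ℂ) - 1) / (t : ℂ)) • y₂ := by
          have h1 : y₂ + (t : ℂ) • (y₁ - y₂) = 0 := h0'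
          have h2 : (t : ℂ) • y₁ = ((t : ℂ) - 1) • y₂ := by
            have h1' : y₂ + ((t : ℂ) • y₁ - (t : ℂ) • y₂) = 0 := by
              rw [← smul_sub]; exact h1
            have h3 : (t : ℂ) • y₁ - (((t : ℂ) - 1) • y₂)
                = y₂ + ((t : ℂ) • y₁ - (t : ℂ) • y₂) := by
              rw [sub_smul, one_smul]; abel
            have h4 : (t : ℂ) • y₁ - (((t : ℂ) - 1) • y₂) = 0 := by rw [h3]; exact h1'
            exact sub_eq_zero.mp h4
          rw [div_eq_mul_inv, mul_comm, mul_smul, ← h2, ← mul_smul,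
            inv_mul_cancel₀ htne, one_smul]
        rw [hy₁eq, hscale] at hq₁re
        set c : ℂ := ((t : ℂ) - 1) / (t : ℂ) with hcc
        have hmc : (starRingEnd ℂ) c * c = ((Complex.normSq c : ℝ) : ℂ) := by
          rw [mul_comm]; exact Complex.mul_conj c
        rw [hmc] at hq₁re
        have hre' : (((Complex.normSq c : ℝ) : ℂ) * (star y₂ ⬝ᵥ (G *ᵥ y₂))).re
            = Complex.normSq c * (star y₂ ⬝ᵥ (G *ᵥ y₂)).re := by
          rw [Complex.mul_re, Complex.ofReal_re, Complex.ofReal_im]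
          ring
        rw [hre'] at hq₁re
        nlinarith [Complex.normSq_nonneg c, hq₂re]
    exact ⟨y, hyV, hy0, hyq⟩
end

section
/- Let ωp1, ωp2, a, b be real numbers with ωp1 ≠ 0 and ωp2 ≠ 0, and let G be the Hermitian 4×4 matrix G = [[0, 0, iωp2², 0], [0, 0, 0, iωp1²], [−iωp2², 0, 2a·ωp2², 0], [0, −iωp1², 0, 2b·ωp1²]]. Then the eigenvalues of G (with multiplicity) are exactly the four real numbers b·ωp1² − ωp1²·√(1 + b²), b·ωp1² + ωp1²·√(1 + b²), a·ωp2² − ωp2²·√(1 + a²), and a·ωp2² + ωp2²·√(1 + a²). -/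
open Matrix Polynomial

/-- The eigenvalues (with multiplicity) of the Hermitian matrix `G` of the warm two-stream
G-Hamiltonian structure are exactly `b ωp1² ± ωp1²√(1+b²)` and `a ωp2² ± ωp2²√(1+a²)`. -/
theorem warm_two_stream_G_eigenvalues (ωp1 ωp2 a b : ℝ)
    (h1 : ωp1 ≠ 0) (h2 : ωp2 ≠ 0)
    (G : Matrix (Fin 4) (Fin 4) ℂ)
    (hG : G = !![0, 0, Complex.I*(ωp2:ℂ)^2, 0;
                 0, 0, 0, Complex.I*(ωp1:ℂ)^2;
                 -Complex.I*(ωp2:ℂ)^2, 0, 2*(a:ℂ)*(ωp2:ℂ)^2, 0;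
                 0, -Complex.I*(ωp1:ℂ)^2, 0, 2*(b:ℂ)*(ωp1:ℂ)^2]) :
    G.charpoly.roots =
      {((b*ωp1^2 - ωp1^2*Real.sqrt (1+b^2) : ℝ) : ℂ),
       ((b*ωp1^2 + ωp1^2*Real.sqrt (1+b^2) : ℝ) : ℂ),
       ((a*ωp2^2 - ωp2^2*Real.sqrt (1+a^2) : ℝ) : ℂ),
       ((a*ωp2^2 + ωp2^2*Real.sqrt (1+a^2) : ℝ) : ℂ)} := by
  have hs : ((Real.sqrt (1+b^2) : ℝ):ℂ)^2 = 1 + (b:ℂ)^2 := by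
    have : Real.sqrt (1+b^2) ^ 2 = 1 + b^2 := Real.sq_sqrt (by positivity)
    exact_mod_cast congrArg (Complex.ofReal) this
  have ht : ((Real.sqrt (1+a^2) : ℝ):ℂ)^2 = 1 + (a:ℂ)^2 := by
    have : Real.sqrt (1+a^2) ^ 2 = 1 + a^2 := Real.sq_sqrt (by positivity)
    exact_mod_cast congrArg (Complex.ofReal) this
  set r1 : ℂ := ((b*ωp1^2 - ωp1^2*Real.sqrt (1+b^2) : ℝ) : ℂ) with hr1
  set r2 : ℂ := ((b*ωp1^2 + ωp1^2*Real.sqrt (1+b^2) : ℝ) : ℂ) with hr2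
  set r3 : ℂ := ((a*ωp2^2 - ωp2^2*Real.sqrt (1+a^2) : ℝ) : ℂ) with hr3
  set r4 : ℂ := ((a*ωp2^2 + ωp2^2*Real.sqrt (1+a^2) : ℝ) : ℂ) with hr4
  have hcp : G.charpoly = (X - C r1) * (X - C r2) * ((X - C r3) * (X - C r4)) := by
    rw [Matrix.charpoly]
    rw [show G.charmatrix = !![X - C (0:ℂ), -C 0, -C (Complex.I*(ωp2:ℂ)^2), -C 0;
      -C 0, X - C 0, -C 0, -C (Complex.I*(ωp1:ℂ)^2);
      -C (-Complex.I*(ωp2:ℂ)^2), -C 0, X - C (2*(a:ℂ)*(ωp2:ℂ)^2), -C 0;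
      -C 0, -C (-Complex.I*(ωp1:ℂ)^2), -C 0, X - C (2*(b:ℂ)*(ωp1:ℂ)^2)] from by
        ext i j
        fin_cases i <;> fin_cases j <;>
          simp [charmatrix_apply, hG, Matrix.one_apply]]
    apply Polynomial.funext
    intro x
    simp [Matrix.det_succ_row_zero, Fin.sum_univ_succ, Fin.succAbove, hr1, hr2, hr3, hr4]
    ring_nf
    rw [hs, ht]
    have hI4 : Complex.I^4 = 1 := by
      norm_num [pow_succ, Complex.I_sq]
    linear_combination (-(x*(a:ℂ)*(ωp2:ℂ)^2*(ωp1:ℂ)^4*2) - x*(ωp2:ℂ)^4*(b:ℂ)*(ωp1:ℂ)^2*2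
      + x^2*(ωp2:ℂ)^4 + x^2*(ωp1:ℂ)^4) * Complex.I_sq + ((ωp2:ℂ)^4*(ωp1:ℂ)^4) * hI4
  rw [hcp]
  rw [roots_mul (mul_ne_zero (mul_ne_zero (X_sub_C_ne_zero r1) (X_sub_C_ne_zero r2))
        (mul_ne_zero (X_sub_C_ne_zero r3) (X_sub_C_ne_zero r4))),
      roots_mul (mul_ne_zero (X_sub_C_ne_zero r1) (X_sub_C_ne_zero r2)),
      roots_mul (mul_ne_zero (X_sub_C_ne_zero r3) (X_sub_C_ne_zero r4)),
      roots_X_sub_C, roots_X_sub_C, roots_X_sub_C, roots_X_sub_C]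
  rfl
end

section
/- Let ωp1, ωp2, a, b, c, d be real numbers and let A be the complex 4×4 matrix A = [[−2ia, 0, a² − ωp1² − c², −ωp1²], [0, −2ib, −ωp2², b² − ωp2² − d²], [1, 0, 0, 0], [0, 1, 0, 0]]. Then for every complex number ω with (ω − a)² ≠ c² and (ω − b)² ≠ d², the number −iω is an eigenvalue of A (i.e., det(A + iωI) = 0) if and only if ω satisfies the warm two-stream dispersion relation ωp1²/((ω − a)² − c²) + ωp2²/((ω − b)² − d²) = 1. -/
set_option maxHeartbeats 2000000


open Matrix

/-- For the warm two-stream matrix `A`, and any complex `ω` avoiding the resonances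
`(ω−a)² = c²`, `(ω−b)² = d²`, the number `−iω` is an eigenvalue of `A` if and only if `ω`
satisfies the warm two-stream dispersion relation. -/
theorem warm_two_stream_dispersion_relation (ωp1 ωp2 a b c d : ℝ)
    (A : Matrix (Fin 4) (Fin 4) ℂ)
    (hA : A = !![-2*Complex.I*(a:ℂ), 0, (a:ℂ)^2 - (ωp1:ℂ)^2 - (c:ℂ)^2, -(ωp1:ℂ)^2;
                 0, -2*Complex.I*(b:ℂ), -(ωp2:ℂ)^2, (b:ℂ)^2 - (ωp2:ℂ)^2 - (d:ℂ)^2;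
                 1, 0, 0, 0;
                 0, 1, 0, 0])
    (ω : ℂ) (hc : (ω - a)^2 ≠ (c:ℂ)^2) (hd : (ω - b)^2 ≠ (d:ℂ)^2) :
    (A + (Complex.I * ω) • (1 : Matrix (Fin 4) (Fin 4) ℂ)).det = 0 ↔
      (ωp1:ℂ)^2 / ((ω - a)^2 - (c:ℂ)^2) + (ωp2:ℂ)^2 / ((ω - b)^2 - (d:ℂ)^2) = 1 := by
  subst hA
  have hc' : (ω - a)^2 - (c:ℂ)^2 ≠ 0 := sub_ne_zero.mpr hc
  have hd' : (ω - b)^2 - (d:ℂ)^2 ≠ 0 := sub_ne_zero.mpr hd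
  have hdet : (!![-2*Complex.I*(a:ℂ), 0, (a:ℂ)^2 - (ωp1:ℂ)^2 - (c:ℂ)^2, -(ωp1:ℂ)^2;
                 0, -2*Complex.I*(b:ℂ), -(ωp2:ℂ)^2, (b:ℂ)^2 - (ωp2:ℂ)^2 - (d:ℂ)^2;
                 1, 0, 0, 0;
                 0, 1, 0, 0] + (Complex.I * ω) • (1 : Matrix (Fin 4) (Fin 4) ℂ)).det
      = ((ω - a)^2 - (c:ℂ)^2) * ((ω - b)^2 - (d:ℂ)^2)
        - (ωp1:ℂ)^2 * ((ω - b)^2 - (d:ℂ)^2) - (ωp2:ℂ)^2 * ((ω - a)^2 - (c:ℂ)^2) := by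
    have hM : (!![-2*Complex.I*(a:ℂ), 0, (a:ℂ)^2 - (ωp1:ℂ)^2 - (c:ℂ)^2, -(ωp1:ℂ)^2;
                 0, -2*Complex.I*(b:ℂ), -(ωp2:ℂ)^2, (b:ℂ)^2 - (ωp2:ℂ)^2 - (d:ℂ)^2;
                 1, 0, 0, 0;
                 0, 1, 0, 0] + (Complex.I * ω) • (1 : Matrix (Fin 4) (Fin 4) ℂ))
        = !![-2*Complex.I*(a:ℂ) + Complex.I * ω, 0, (a:ℂ)^2 - (ωp1:ℂ)^2 - (c:ℂ)^2, -(ωp1:ℂ)^2;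
                 0, -2*Complex.I*(b:ℂ) + Complex.I * ω, -(ωp2:ℂ)^2, (b:ℂ)^2 - (ωp2:ℂ)^2 - (d:ℂ)^2;
                 1, 0, Complex.I * ω, 0;
                 0, 1, 0, Complex.I * ω] := by
      ext i j
      fin_cases i <;> fin_cases j <;>
        simp [Matrix.one_apply, Matrix.vecHead, Matrix.vecTail]
    rw [hM]
    simp [Matrix.det_succ_row_zero, Fin.sum_univ_succ, Fin.succAbove, Fin.castSucc, Fin.castAdd, Fin.castLE]
    ring_nf
    rw [Complex.I_pow_four]
    ring_nf
    rw [Complex.I_sq]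
    ring
  rw [hdet]
  rw [div_add_div _ _ hc' hd', div_eq_one_iff_eq (mul_ne_zero hc' hd')]
  constructor
  · intro h; linear_combination -h
  · intro h; linear_combination -h
end

section
/- Let ωp1 > 0 and ωp2 > 0 be real numbers and u a real number. Then the cold two-stream quartic polynomial p(ω) = ω²(ω − u)² − ωp1²(ω − u)² − ωp2²ω² (equivalently, the dispersion relation ωp1²/ω² + ωp2²/(ω − u)² = 1 with denominators cleared) has a complex root ω with nonzero imaginary part if and only if 0 < u² < (ωp1^{2/3} + ωp2^{2/3})³. -/
lemma radon (α β x y : ℝ) (hα : 0 < α) (hβ : 0 < β) (hx : 0 < x) (hy : 0 < y) :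
    (α+β)^3*x^2*y^2 ≤ α^3*y^2*(x+y)^2 + β^3*x^2*(x+y)^2 := by
  nlinarith [mul_nonneg (sq_nonneg (α*y-β*x))
    (by positivity : (0:ℝ) ≤ 2*α*x*y + α*y^2 + β*x^2 + 2*β*x*y)]

lemma mono1 (a b u z w : ℝ) (ha : 0 < a) (hb : 0 < b) (hu : 0 < u)
    (hzw : z < w) (hw0 : w < 0)
    (hz : z^2*(z-u)^2 - a^2*(z-u)^2 - b^2*z^2 = 0)
    (hwe : w^2*(w-u)^2 - a^2*(w-u)^2 - b^2*w^2 = 0) : False := by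
  have hz0 : z ≠ 0 := by nlinarith
  have hw0' : w ≠ 0 := ne_of_lt hw0
  have hzu : z - u ≠ 0 := by nlinarith
  have hwu : w - u ≠ 0 := by nlinarith
  have Fz : a^2/z^2 + b^2/(z-u)^2 = 1 := by
    field_simp
    linear_combination -hz
  have Fw : a^2/w^2 + b^2/(w-u)^2 = 1 := by
    field_simp
    linear_combination -hwe
  have h1 : a^2/z^2 < a^2/w^2 :=
    div_lt_div_of_pos_left (by positivity) (by positivity) (by nlinarith)
  have h2 : b^2/(z-u)^2 < b^2/(w-u)^2 :=
    div_lt_div_of_pos_left (by positivity) (by positivity) (by nlinarith)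
  linarith

lemma mono2 (a b u z w : ℝ) (ha : 0 < a) (hb : 0 < b) (hu : 0 < u)
    (hzw : z < w) (hz0 : u < z)
    (hz : z^2*(z-u)^2 - a^2*(z-u)^2 - b^2*z^2 = 0)
    (hwe : w^2*(w-u)^2 - a^2*(w-u)^2 - b^2*w^2 = 0) : False := by
  have hz0' : z ≠ 0 := by nlinarith
  have hw0' : w ≠ 0 := by nlinarith
  have hzu : z - u ≠ 0 := by nlinarith
  have hwu : w - u ≠ 0 := by nlinarith
  have Fz : a^2/z^2 + b^2/(z-u)^2 = 1 := by
    field_simp; linear_combination -hz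
  have Fw : a^2/w^2 + b^2/(w-u)^2 = 1 := by
    field_simp; linear_combination -hwe
  have h1 : a^2/w^2 < a^2/z^2 :=
    div_lt_div_of_pos_left (by positivity) (by positivity) (by nlinarith)
  have h2 : b^2/(w-u)^2 < b^2/(z-u)^2 :=
    div_lt_div_of_pos_left (by positivity) (by positivity) (by nlinarith)
  linarith


lemma dbl1 (a b u z : ℝ) (ha : 0 < a) (hb : 0 < b) (hu : 0 < u) (hz : z < 0)
    (hroot : z^2*(z-u)^2 - a^2*(z-u)^2 - b^2*z^2 = 0)
    (hder : 4*z^3 - 6*u*z^2 + 2*(u^2-a^2-b^2)*z + 2*a^2*u = 0) : False := by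
  have key : a^2*u*(z-u) = z^3*(z-u) := by linear_combination (-(z/2))*hder + hroot
  have hzu : z - u ≠ 0 := by nlinarith
  have h2 : a^2*u = z^3 := mul_right_cancel₀ hzu key
  nlinarith [mul_pos (mul_pos ha ha) hu,
    mul_pos (mul_pos (neg_pos.2 hz) (neg_pos.2 hz)) (neg_pos.2 hz)]

lemma dbl2 (a b u z : ℝ) (ha : 0 < a) (hb : 0 < b) (hu : 0 < u) (hz : u < z)
    (hroot : z^2*(z-u)^2 - a^2*(z-u)^2 - b^2*z^2 = 0)
    (hder : 4*z^3 - 6*u*z^2 + 2*(u^2-a^2-b^2)*z + 2*a^2*u = 0) : False := by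
  have key : (z-u)^3*z = (-(b^2*u))*z := by linear_combination ((z-u)/2)*hder - hroot
  have hz0 : z ≠ 0 := by nlinarith
  have h2 : (z-u)^3 = -(b^2*u) := mul_right_cancel₀ hz0 key
  nlinarith [mul_pos (mul_pos hb hb) hu,
    mul_pos (mul_pos (sub_pos.2 hz) (sub_pos.2 hz)) (sub_pos.2 hz)]

set_option maxHeartbeats 2000000 in
lemma fwd (a b u : ℝ) (ha : 0 < a) (hb : 0 < b) (hu : 0 < u) (ω : ℂ)
    (h : ω^2 * (ω - (u:ℂ))^2 - (a:ℂ)^2*(ω-(u:ℂ))^2 - (b:ℂ)^2*ω^2 = 0)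
    (hy : ω.im ≠ 0) :
    u^2 < (a ^ ((2:ℝ)/3) + b ^ ((2:ℝ)/3))^3 := by
  set x := ω.re with hxdef
  set y := ω.im with hydef
  have hy2 : 0 < y^2 := by positivity
  set s : ℝ := x^2 + y^2 with hsdef
  set t : ℝ := (x-u)^2 + y^2 with htdef
  have hs : 0 < s := by nlinarith [sq_nonneg x]
  have ht : 0 < t := by nlinarith [sq_nonneg (x-u)]
  set w1 : ℂ := (starRingEnd ℂ) (ω^2) with hw1def
  set w2 : ℂ := (starRingEnd ℂ) ((ω - (u:ℂ))^2) with hw2def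
  have n1 : ω^2 * w1 = ((s:ℝ):ℂ)^2 := by
    rw [hw1def, Complex.mul_conj]
    rw [show Complex.normSq (ω^2) = (Complex.normSq ω)^2 from map_pow _ _ _]
    rw [Complex.normSq_apply]
    push_cast
    rw [hsdef]; push_cast; ring
  have n2 : (ω - (u:ℂ))^2 * w2 = ((t:ℝ):ℂ)^2 := by
    rw [hw2def, Complex.mul_conj]
    rw [show Complex.normSq ((ω-(u:ℂ))^2) = (Complex.normSq (ω-(u:ℂ)))^2 from map_pow _ _ _]
    rw [Complex.normSq_apply]
    simp only [Complex.sub_re, Complex.sub_im, Complex.ofReal_re, Complex.ofReal_im]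
    push_cast
    rw [htdef]; push_cast; ring
  have HH : (a:ℂ)^2*(t:ℂ)^2*w1 + (b:ℂ)^2*(s:ℂ)^2*w2 = (s:ℂ)^2*(t:ℂ)^2 := by
    linear_combination (-(w1*w2))*h + (((ω-(u:ℂ))^2*w2) - (b:ℂ)^2*w2)*n1
      + ((s:ℂ)^2 - (a:ℂ)^2*w1)*n2
  have hw1re : w1.re = x*x - y*y := by
    rw [hw1def]; simp [pow_two, Complex.mul_re]; rfl
  have hw1im : w1.im = -(x*y + y*x) := by
    rw [hw1def]; simp [pow_two, Complex.mul_im]; ring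
  have hw2re : w2.re = (x-u)*(x-u) - y*y := by
    rw [hw2def]; simp [pow_two, Complex.mul_re]; rfl
  have hw2im : w2.im = -((x-u)*y + y*(x-u)) := by
    rw [hw2def]; simp [pow_two, Complex.mul_im]; ring
  have K2 : a^2*t^2*(x^2-y^2) + b^2*s^2*((x-u)^2-y^2) = s^2*t^2 := by
    have := congrArg Complex.re HH
    simp only [Complex.add_re, Complex.mul_re, Complex.mul_im, Complex.ofReal_re,
      Complex.ofReal_im, pow_two, hw1re, hw1im, hw2re, hw2im] at this
    linear_combination this
  have K1 : a^2*t^2*x + b^2*s^2*(x-u) = 0 := by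
    have him := congrArg Complex.im HH
    simp only [Complex.add_im, Complex.mul_re, Complex.mul_im, Complex.ofReal_re,
      Complex.ofReal_im, pow_two, hw1re, hw1im, hw2re, hw2im] at him
    have h2 : (a^2*t^2*x + b^2*s^2*(x-u)) * (-2*y) = 0 := by linear_combination him
    rcases mul_eq_zero.1 h2 with h3 | h3
    · exact h3
    · exfalso; apply hy; linarith
  have hxs0 : x^2 < s := by rw [hsdef]; nlinarith
  have hxt0 : (u-x)^2 < t := by rw [htdef]; nlinarith [sq_nonneg (x-u)]
  clear hw1re hw1im hw2re hw2im HH n1 n2 h hw1def hw2def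
  clear w1 w2
  clear_value s t x y
  clear hy hxdef hydef ω
  -- now the inequalities
  have hx : 0 < x := by
    by_contra hx'
    push_neg at hx'
    have h1 : a^2*t^2*x ≤ 0 :=
      mul_nonpos_of_nonneg_of_nonpos (by positivity) hx'
    have h2 : b^2*s^2*(x-u) < 0 :=
      mul_neg_of_pos_of_neg (by positivity) (by linarith)
    linarith
  have hxu : x < u := by
    by_contra hx'
    push_neg at hx'
    have h1 : 0 < a^2*t^2*x := by positivity
    have h2 : 0 ≤ b^2*s^2*(x-u) :=
      mul_nonneg (by positivity) (by linarith)
    linarith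
  clear hsdef htdef
  have he1 : (a^2*u*x - s^2)*t^2 = y^2*(a^2*t^2 + b^2*s^2) := by
    linear_combination K2 - (x-u)*K1
  have hs2 : s^2 < a^2*u*x := by
    have h4 : 0 < (a^2*u*x - s^2)*t^2 := by rw [he1]; positivity
    by_contra hcon
    push_neg at hcon
    have h5 : (a^2*u*x - s^2)*t^2 ≤ 0 :=
      mul_nonpos_of_nonpos_of_nonneg (by linarith) (by positivity)
    linarith
  have he2 : (b^2*u*(u-x) - t^2)*s^2 = y^2*(a^2*t^2 + b^2*s^2) := by
    linear_combination K2 - x*K1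
  have ht2 : t^2 < b^2*u*(u-x) := by
    have h4 : 0 < (b^2*u*(u-x) - t^2)*s^2 := by rw [he2]; positivity
    by_contra hcon
    push_neg at hcon
    have h5 : (b^2*u*(u-x) - t^2)*s^2 ≤ 0 :=
      mul_nonpos_of_nonpos_of_nonneg (by linarith) (by positivity)
    linarith
  clear K1 K2 he1 he2
  have hxs : x^2 < s := hxs0
  have hx3 : x^3 < a^2*u := by
    have h6 : x^4 < s^2 := by
      nlinarith [mul_pos (sub_pos.2 hxs) (show 0 < s + x^2 by positivity)]
    have h7 : x^4 < a^2*u*x := lt_trans h6 hs2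
    by_contra hcon
    push_neg at hcon
    have h8 := mul_le_mul_of_nonneg_right hcon hx.le
    nlinarith [h7, h8]
  have hxt : (u-x)^2 < t := hxt0
  have hux3 : (u-x)^3 < b^2*u := by
    have h5 : 0 < u - x := by linarith
    have h6 : (u-x)^4 < t^2 := by
      nlinarith [mul_pos (sub_pos.2 hxt) (show 0 < t + (u-x)^2 by positivity)]
    have h7 : (u-x)^4 < b^2*u*(u-x) := lt_trans h6 ht2
    by_contra hcon
    push_neg at hcon
    have h8 := mul_le_mul_of_nonneg_right hcon h5.le
    nlinarith [h7, h8]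
  -- rpow finish
  have cube_root_lt : ∀ v c : ℝ, 0 < v → v^3 < c → v < c ^ ((1:ℝ)/3) := by
    intro v c hv hvc
    have h0 : (0:ℝ) < c := by nlinarith [mul_pos (mul_pos hv hv) hv]
    have h1 : v = (v^(3:ℕ) : ℝ) ^ ((1:ℝ)/3) := by
      rw [← Real.rpow_natCast v 3, ← Real.rpow_mul hv.le]
      norm_num
    rw [h1]
    apply Real.rpow_lt_rpow (by positivity) (by exact_mod_cast hvc) (by norm_num)
  have hsplit : ∀ c : ℝ, 0 < c → (c^2*u) ^ ((1:ℝ)/3) = c ^ ((2:ℝ)/3) * u ^ ((1:ℝ)/3) := by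
    intro c hc
    rw [Real.mul_rpow (by positivity) hu.le]
    congr 1
    rw [← Real.rpow_natCast c 2, ← Real.rpow_mul hc.le]
    norm_num
  have hxlt : x < a ^ ((2:ℝ)/3) * u ^ ((1:ℝ)/3) := by
    have := cube_root_lt x (a^2*u) hx hx3
    rwa [hsplit a ha] at this
  have huxlt : u - x < b ^ ((2:ℝ)/3) * u ^ ((1:ℝ)/3) := by
    have := cube_root_lt (u-x) (b^2*u) (by linarith) hux3
    rwa [hsplit b hb] at this
  have hu13 : 0 < u ^ ((1:ℝ)/3) := Real.rpow_pos_of_pos hu _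
  have hkey : u ^ ((2:ℝ)/3) < a ^ ((2:ℝ)/3) + b ^ ((2:ℝ)/3) := by
    have hmul : u ^ ((2:ℝ)/3) * u ^ ((1:ℝ)/3) = u := by
      rw [← Real.rpow_add hu]; norm_num
    have : u ^ ((2:ℝ)/3) * u ^ ((1:ℝ)/3) <
        (a ^ ((2:ℝ)/3) + b ^ ((2:ℝ)/3)) * u ^ ((1:ℝ)/3) := by
      rw [hmul]; linarith [hxlt, huxlt]
    exact lt_of_mul_lt_mul_right this hu13.le
  have hfin : u^2 = (u ^ ((2:ℝ)/3))^(3:ℕ) := by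
    rw [← Real.rpow_natCast (u ^ ((2:ℝ)/3)) 3, ← Real.rpow_mul hu.le]
    norm_num
  rw [hfin]
  exact pow_lt_pow_left₀ hkey (Real.rpow_nonneg hu.le _) (by norm_num)

set_option maxHeartbeats 1000000 in
lemma bwd_aux (a b u : ℝ) (ha : 0 < a) (hb : 0 < b) (hu : 0 < u)
    (hcrit : u^2 < (a ^ ((2:ℝ)/3) + b ^ ((2:ℝ)/3))^3) :
    ∃ r₁ r₂ : ℝ, r₁ < 0 ∧ u < r₂ ∧
      (r₁^2*(r₁-u)^2 - a^2*(r₁-u)^2 - b^2*r₁^2 = 0) ∧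
      (r₂^2*(r₂-u)^2 - a^2*(r₂-u)^2 - b^2*r₂^2 = 0) ∧
      (∀ x : ℝ, 0 ≤ x → x ≤ u → x^2*(x-u)^2 - a^2*(x-u)^2 - b^2*x^2 < 0) := by
  set f : ℝ → ℝ := fun x => x^2*(x-u)^2 - a^2*(x-u)^2 - b^2*x^2 with hfdef
  have hα : 0 < a ^ ((2:ℝ)/3) := Real.rpow_pos_of_pos ha _
  have hβ : 0 < b ^ ((2:ℝ)/3) := Real.rpow_pos_of_pos hb _
  have ha3 : (a ^ ((2:ℝ)/3))^(3:ℕ) = a^2 := by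
    rw [← Real.rpow_natCast (a ^ ((2:ℝ)/3)) 3, ← Real.rpow_mul ha.le]
    norm_num
  have hb3 : (b ^ ((2:ℝ)/3))^(3:ℕ) = b^2 := by
    rw [← Real.rpow_natCast (b ^ ((2:ℝ)/3)) 3, ← Real.rpow_mul hb.le]
    norm_num
  have pneg : ∀ x : ℝ, 0 ≤ x → x ≤ u → f x < 0 := by
    intro x hx0 hxu
    rcases eq_or_lt_of_le hx0 with h0 | h0
    · simp only [hfdef]
      rw [← h0]
      nlinarith [mul_pos (mul_pos ha ha) (mul_pos hu hu)]
    rcases eq_or_lt_of_le hxu with h1 | h1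
    · simp only [hfdef, h1]
      nlinarith [mul_pos (mul_pos hb hb) (mul_pos hu hu)]
    have hux : 0 < u - x := by linarith
    have hR := radon (a ^ ((2:ℝ)/3)) (b ^ ((2:ℝ)/3)) x (u-x) hα hβ h0 hux
    rw [show x + (u-x) = u by ring] at hR
    rw [ha3, hb3] at hR
    have h2 : u^2*(x^2*(u-x)^2) < (a ^ ((2:ℝ)/3) + b ^ ((2:ℝ)/3))^3*(x^2*(u-x)^2) :=
      mul_lt_mul_of_pos_right hcrit (by positivity)
    have h3 : u^2*(x^2*(u-x)^2) < (a^2*(u-x)^2 + b^2*x^2)*u^2 := by nlinarith [hR, h2]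
    have h4 : x^2*(u-x)^2 < a^2*(u-x)^2 + b^2*x^2 := by
      have hu2 : 0 < u^2 := by positivity
      nlinarith [h3]
    simp only [hfdef]
    nlinarith [h4]
  have hcont : Continuous f := by
    simp only [hfdef]; fun_prop
  set L : ℝ := a + b + 1 with hLdef
  have hL : 0 < L := by positivity
  have hfnL : 0 < f (-L) := by
    simp only [hfdef]
    have h1 : 0 < (L^2 - a^2 - b^2)*((-L)-u)^2 := by
      apply mul_pos
      · simp only [hLdef]; nlinarith
      · nlinarith
    nlinarith [mul_pos (mul_pos hb hb) (show 0 < 2*L*u + u^2 by positivity), h1]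
  have hfuL : 0 < f (u + L) := by
    simp only [hfdef]
    have h1 : 0 < (L^2 - a^2 - b^2)*(u+L)^2 := by
      apply mul_pos
      · simp only [hLdef]; nlinarith
      · positivity
    nlinarith [mul_pos (mul_pos ha ha) (show 0 < 2*L*u + u^2 by positivity), h1]
  -- root r₁ in [-L, 0]
  obtain ⟨r₁, hr₁mem, hr₁⟩ : ∃ r ∈ Set.Icc (-L) 0, f r = 0 := by
    have hsub := intermediate_value_Icc' (show -L ≤ (0:ℝ) by linarith) hcont.continuousOn
    have h0mem : (0:ℝ) ∈ Set.Icc (f 0) (f (-L)) :=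
      ⟨(pneg 0 le_rfl hu.le).le, hfnL.le⟩
    obtain ⟨r, hr, hfr⟩ := hsub h0mem
    exact ⟨r, hr, hfr⟩
  obtain ⟨r₂, hr₂mem, hr₂⟩ : ∃ r ∈ Set.Icc u (u+L), f r = 0 := by
    have hsub := intermediate_value_Icc (show u ≤ u+L by linarith) hcont.continuousOn
    have h0mem : (0:ℝ) ∈ Set.Icc (f u) (f (u+L)) :=
      ⟨(pneg u hu.le le_rfl).le, hfuL.le⟩
    obtain ⟨r, hr, hfr⟩ := hsub h0mem
    exact ⟨r, hr, hfr⟩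
  have hr₁0 : r₁ < 0 := by
    rcases lt_or_eq_of_le hr₁mem.2 with h | h
    · exact h
    · exfalso; rw [h] at hr₁; exact absurd hr₁ (pneg 0 le_rfl hu.le).ne
  have hr₂0 : u < r₂ := by
    rcases lt_or_eq_of_le hr₂mem.1 with h | h
    · exact h
    · exfalso; rw [← h] at hr₂; exact absurd hr₂ (pneg u hu.le le_rfl).ne
  exact ⟨r₁, r₂, hr₁0, hr₂0, hr₁, hr₂, fun x h1 h2 => pneg x h1 h2⟩

set_option maxHeartbeats 1000000 in
lemma bwd (a b u : ℝ) (ha : 0 < a) (hb : 0 < b) (hu : 0 < u)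
    (hcrit : u^2 < (a ^ ((2:ℝ)/3) + b ^ ((2:ℝ)/3))^3) :
    ∃ ω : ℂ, ω^2 * (ω - (u:ℂ))^2 - (a:ℂ)^2*(ω-(u:ℂ))^2 - (b:ℂ)^2*ω^2 = 0 ∧ ω.im ≠ 0 := by
  obtain ⟨r₁, r₂, hr₁0, hr₂u, hr₁, hr₂, pneg⟩ := bwd_aux a b u ha hb hu hcrit
  set B : ℝ := r₁ + r₂ - 2*u with hB
  set C : ℝ := u^2 - a^2 - b^2 + (r₁+r₂)*B - r₁*r₂ with hC
  set c₁ : ℝ := 2*a^2*u - (r₁*r₂)*B + (r₁+r₂)*C with hc₁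
  set c₀ : ℝ := -(a^2*u^2) - (r₁*r₂)*C with hc₀
  have hidR : ∀ x : ℝ, x^2*(x-u)^2 - a^2*(x-u)^2 - b^2*x^2
      = (x-r₁)*(x-r₂)*(x^2+B*x+C) + c₁*x + c₀ := by
    intro x
    simp only [hB, hC, hc₁, hc₀]
    ring
  have hne : r₁ - r₂ ≠ 0 := by intro h; nlinarith
  have e1 : c₁*r₁ + c₀ = 0 := by
    have := hidR r₁
    rw [hr₁] at this
    linarith [this]
  have e2 : c₁*r₂ + c₀ = 0 := by
    have := hidR r₂
    rw [hr₂] at this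
    linarith [this]
  have hc₁0 : c₁ = 0 := by
    have h3 : c₁*(r₁ - r₂) = 0 := by linarith
    rcases mul_eq_zero.1 h3 with h | h
    · exact h
    · exact absurd h hne
  have hc₀0 : c₀ = 0 := by
    have := e1; rw [hc₁0] at this; linarith
  have hfact : ∀ x : ℝ, x^2*(x-u)^2 - a^2*(x-u)^2 - b^2*x^2
      = (x-r₁)*(x-r₂)*(x^2+B*x+C) := by
    intro x
    rw [hidR x, hc₁0, hc₀0]
    ring
  have hDer : ∀ x : ℝ, 4*x^3 - 6*u*x^2 + 2*(u^2-a^2-b^2)*x + 2*a^2*u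
      = (x-r₂)*(x^2+B*x+C) + (x-r₁)*(x^2+B*x+C) + (x-r₁)*(x-r₂)*(2*x+B) + c₁ := by
    intro x
    simp only [hB, hC, hc₁]
    ring
  by_cases hdisc : B^2 - 4*C < 0
  · -- complex roots: build the root
    set y₀ : ℝ := Real.sqrt (4*C - B^2) with hy₀
    have hy₀pos : 0 < y₀ := Real.sqrt_pos.2 (by linarith)
    have hy₀sq : y₀^2 = 4*C - B^2 := Real.sq_sqrt (by linarith)
    set ω : ℂ := (↑(-B/2) : ℂ) + ↑(y₀/2) * Complex.I with hω
    have him : ω.im = y₀/2 := by simp [hω]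
    have hquad : ω^2 + (B:ℂ)*ω + (C:ℂ) = 0 := by
      have hcast : ((y₀:ℂ))^2 = 4*(C:ℂ) - (B:ℂ)^2 := by exact_mod_cast congrArg (Complex.ofReal) hy₀sq
      rw [hω]
      push_cast
      linear_combination ((y₀:ℂ)^2/4) * Complex.I_sq + (-1/4 : ℂ)*hcast
    refine ⟨ω, ?_, by rw [him]; positivity⟩
    have hidC : ω^2 * (ω - (u:ℂ))^2 - (a:ℂ)^2*(ω-(u:ℂ))^2 - (b:ℂ)^2*ω^2
        = (ω-(r₁:ℂ))*(ω-(r₂:ℂ))*(ω^2+(B:ℂ)*ω+(C:ℂ)) + (c₁:ℂ)*ω + (c₀:ℂ) := by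
      simp only [hB, hC, hc₁, hc₀]
      push_cast
      ring
    rw [hidC, hquad]
    rw [show ((c₁:ℝ):ℂ) = 0 by exact_mod_cast hc₁0, show ((c₀:ℝ):ℂ) = 0 by exact_mod_cast hc₀0]
    ring
  · -- real root of the quadratic: contradiction
    exfalso
    push_neg at hdisc
    set z : ℝ := (-B + Real.sqrt (B^2 - 4*C))/2 with hz
    have hsq : (Real.sqrt (B^2-4*C))^2 = B^2 - 4*C := Real.sq_sqrt (by linarith)
    have hzq : z^2 + B*z + C = 0 := by
      rw [hz]; linear_combination (1/4)*hsq
    have hfz : z^2*(z-u)^2 - a^2*(z-u)^2 - b^2*z^2 = 0 := by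
      rw [hfact z, hzq, mul_zero]
    have hzcases : z < 0 ∨ u < z := by
      by_contra hcon
      push_neg at hcon
      exact absurd hfz (pneg z hcon.1 hcon.2).ne
    rcases hzcases with hzneg | hzpos
    · by_cases hzr : z = r₁
      · -- double root at r₁
        have hq₁ : r₁^2 + B*r₁ + C = 0 := by rw [← hzr]; exact hzq
        have hD := hDer r₁
        rw [hq₁, hc₁0] at hD
        simp at hD
        exact dbl1 a b u r₁ ha hb hu hr₁0 hr₁ (by linarith [hD])
      · rcases lt_or_gt_of_ne hzr with h | h
        · exact mono1 a b u z r₁ ha hb hu h hr₁0 hfz hr₁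
        · exact mono1 a b u r₁ z ha hb hu h hzneg hr₁ hfz
    · by_cases hzr : z = r₂
      · have hq₂ : r₂^2 + B*r₂ + C = 0 := by rw [← hzr]; exact hzq
        have hD := hDer r₂
        rw [hq₂, hc₁0] at hD
        simp at hD
        exact dbl2 a b u r₂ ha hb hu hr₂u hr₂ (by linarith [hD])
      · rcases lt_or_gt_of_ne hzr with h | h
        · exact mono2 a b u z r₂ ha hb hu h hzpos hfz hr₂
        · exact mono2 a b u r₂ z ha hb hu h hr₂u hr₂ hfz

/-- Cold two-stream instability criterion: the quartic
`p(ω) = ω²(ω−u)² − ωp1²(ω−u)² − ωp2²ω²` has a root `ω ∈ ℂ` with nonzero imaginary part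
if and only if `0 < u² < (ωp1^{2/3} + ωp2^{2/3})³`. -/
theorem cold_two_stream_instability (ωp1 ωp2 u : ℝ) (h1 : 0 < ωp1) (h2 : 0 < ωp2) :
    (∃ ω : ℂ, ω^2 * (ω - u)^2 - (ωp1:ℂ)^2 * (ω - u)^2 - (ωp2:ℂ)^2 * ω^2 = 0 ∧
      ω.im ≠ 0) ↔
    (0 < u^2 ∧ u^2 < (ωp1 ^ ((2:ℝ)/3) + ωp2 ^ ((2:ℝ)/3))^3) := by
  constructor
  · rintro ⟨ω, h, him⟩
    rcases lt_trichotomy u 0 with hu | hu | hu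
    · have hu2 : 0 < u^2 := by nlinarith
      refine ⟨hu2, ?_⟩
      have hfwd := fwd ωp1 ωp2 (-u) h1 h2 (by linarith) (-ω) ?_ ?_
      · rw [show (-u)^2 = u^2 by ring] at hfwd; exact hfwd
      · push_cast
        linear_combination h
      · simp [him]
    · exfalso
      subst hu
      apply him
      have hω : ω ≠ 0 := fun h0 => him (by rw [h0]; rfl)
      have key : ω^2 * (ω^2 - ((ωp1:ℂ)^2 + (ωp2:ℂ)^2)) = 0 := by
        push_cast at h ⊢
        linear_combination h
      rcases mul_eq_zero.1 key with h3 | h3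
      · exact absurd (pow_eq_zero_iff (by norm_num)|>.1 h3) hω
      · have hsq : ω^2 = ((ωp1^2 + ωp2^2 : ℝ) : ℂ) := by
          push_cast
          linear_combination h3
        set c : ℝ := Real.sqrt (ωp1^2 + ωp2^2) with hc
        have hc2 : (c:ℝ)^2 = ωp1^2 + ωp2^2 := Real.sq_sqrt (by positivity)
        have hfac : (ω - (c:ℂ))*(ω + (c:ℂ)) = 0 := by
          have : ((c:ℝ):ℂ)^2 = ((ωp1^2 + ωp2^2 : ℝ) : ℂ) := by exact_mod_cast congrArg Complex.ofReal hc2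
          linear_combination hsq - this
        rcases mul_eq_zero.1 hfac with h4 | h4
        · rw [sub_eq_zero.1 h4]; simp
        · rw [show ω = -(c:ℂ) by linear_combination h4]; simp
    · exact ⟨by positivity, fwd ωp1 ωp2 u h1 h2 hu ω h him⟩
  · rintro ⟨hu2, hcrit⟩
    rcases lt_trichotomy u 0 with hu | hu | hu
    · obtain ⟨ω, hroot, him⟩ := bwd ωp1 ωp2 (-u) h1 h2 (by linarith)
        (by rw [show (-u)^2 = u^2 by ring]; exact hcrit)
      refine ⟨-ω, ?_, by simpa using him⟩
      push_cast at hroot ⊢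
      linear_combination hroot
    · exfalso; rw [hu] at hu2; simp at hu2
    · exact bwd ωp1 ωp2 u h1 h2 hu hcrit
end
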